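/- If S ⊆ Σ* and ℓ < ℓ' are levels such that no word of S has length ℓ or ℓ' and every u ∈ S with |u| > ℓ' satisfies u_ℓ = u_{ℓ'}, then the level ℓ' is not an interesting level of S. -/

import Mathlib

/-- The three-letter alphabet `Σ = {L, X, R}`. -/
inductive Sig : Type
  | L
  | X
  | R
  deriving DecidableEq

namespace Sig

def val : Sig → ℕ
  | L => 0
  | X => 1
  | R => 2

/-- The order `L <lex X <lex R` on letters. -/
def le (a b : Sig) : Prop := a.val ≤ b.val

def lt (a b : Sig) : Prop := a.val < b.val

end Sig

/-- Finite words over the alphabet `Σ = {L, X, R}`. -/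
abbrev Word : Type := List Sig

/-- The `i`-th letter of `w` (with a junk value out of range). -/
def idx (w : Word) (i : ℕ) : Sig := w.getD i Sig.L

/-- Strict lexicographic order on words: comparison at the first differing position, a
proper initial segment preceding its extensions. -/
def lexLt (u v : Word) : Prop :=
  (∃ i, i < u.length ∧ i < v.length ∧ Sig.lt (idx u i) (idx v i) ∧
    ∀ j < i, idx u j = idx v j) ∨
  (u.length < v.length ∧ ∀ j < u.length, idx u j = idx v j)

def lexLe (u v : Word) : Prop := lexLt u v ∨ u = v

/-- The relation `≺`: there is `i < min(|u|,|v|)` with `(u_i, v_i) = (L, R)` and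
`u_j ≤lex v_j` for all `j < i`. -/
def prec (u v : Word) : Prop :=
  ∃ i, i < u.length ∧ i < v.length ∧ idx u i = Sig.L ∧ idx v i = Sig.R ∧
    ∀ j < i, Sig.le (idx u j) (idx v j)

/-- The relation `⪯`. -/
def preceq (u v : Word) : Prop := prec u v ∨ u = v

/-- The relation `⊴`: element-wise comparison of words of the same length. -/
def trleq (u v : Word) : Prop :=
  u.length = v.length ∧ ∀ i < u.length, Sig.le (idx u i) (idx v i)

/-- The relation `⊥`: `⊴`-incomparability. -/
def perp (u v : Word) : Prop := ¬ trleq u v ∧ ¬ trleq v u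

/-- `u` and `v` are related if `u ⪯ v`, `v ⪯ u` or `u ⊥ v`. -/
def related (u v : Word) : Prop := preceq u v ∨ preceq v u ∨ perp u v

/-- The compatibility conditions for a pair `u ≤lex v`. -/
def compatPair (u v : Word) : Prop :=
  (∀ l < min u.length v.length, ¬ (idx u l = Sig.R ∧ idx v l = Sig.L)) ∧
  ((∃ l < min u.length v.length, idx u l = Sig.L ∧ idx v l = Sig.R) →
    ∀ l < min u.length v.length, Sig.le (idx u l) (idx v l))

/-- `u` and `v` are compatible: the `≤lex`-smaller of the two satisfies the compatibility
conditions with the `≤lex`-larger. -/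
def compatible (u v : Word) : Prop :=
  (lexLe u v ∧ compatPair u v) ∨ (lexLe v u ∧ compatPair v u)

/-- `S̄`: the segClosure of `S` under initial segments. -/
def segClosure (S : Set Word) : Set Word := {u | ∃ w ∈ S, u <+: w}

/-- Level `l` of a set of words. -/
def level (S : Set Word) (l : ℕ) : Set Word := {w | w ∈ S ∧ w.length = l}

/-- `S̄_l` : level `l` of the segClosure of `S`. -/
def cLevel (S : Set Word) (l : ℕ) : Set Word := level (segClosure S) l

/-- Isomorphism of level structures `(A; ⪯, ⊴, ≤lex)`: a bijection preserving and
reflecting `⪯`, `⊴` and `≤lex`. -/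
def LevelIso (A B : Set Word) : Prop :=
  ∃ e : Word → Word, Set.BijOn e A B ∧
    ∀ u ∈ A, ∀ v ∈ A,
      (preceq u v ↔ preceq (e u) (e v)) ∧
      (trleq u v ↔ trleq (e u) (e v)) ∧
      (lexLe u v ↔ lexLe (e u) (e v))

/-- A level `i` of `S` is interesting. -/
def Interesting (S : Set Word) (i : ℕ) : Prop :=
  ¬ LevelIso (cLevel S i) (cLevel S (i + 1)) ∨
  (∃ u ∈ cLevel S (i + 1), ∃ v ∈ cLevel S (i + 1),
    ¬ compatible u v ∧ compatible (u.take i) (v.take i)) ∨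
  (∃ u ∈ S, u.length = i)

/-- `τ_S(w)`: delete the characters of `w` whose indices are not interesting levels of `S`. -/
noncomputable def tauW (S : Set Word) (w : Word) : Word :=
  ((List.range w.length).filter
    (fun i => @decide (Interesting S i) (Classical.propDecidable _))).map (fun i => idx w i)

/-- A function is shape-preserving if it commutes with taking embedding types. -/
def ShapePreserving (S : Set Word) (f : Word → Word) : Prop :=
  ∀ w ∈ S, tauW S w = tauW (f '' S) (f w)

/-- `A⌢c`. -/
def appendSet (A : Set Word) (c : Sig) : Set Word := (fun w => w ++ [c]) '' A

def LeafLevelAt (S : Set Word) (l : ℕ) (w : Word) : Prop :=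
  w ∈ cLevel S l ∧ (∀ u ∈ cLevel S l, u ≠ w → related w u) ∧
  cLevel S (l + 1) = appendSet (cLevel S l \ {w}) Sig.X

def LeafLevel (S : Set Word) (l : ℕ) : Prop := ∃ w, LeafLevelAt S l w

def SplitLevelAt (S : Set Word) (l : ℕ) (w : Word) : Prop :=
  w ∈ cLevel S l ∧
  cLevel S (l + 1) =
    appendSet {z ∈ cLevel S l | lexLt z w} Sig.X ∪
    {w ++ [Sig.X], w ++ [Sig.R]} ∪
    appendSet {z ∈ cLevel S l | lexLt w z} Sig.R

def SplitLevel (S : Set Word) (l : ℕ) : Prop := ∃ w, SplitLevelAt S l w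

def NewPerpLevelAt (S : Set Word) (l : ℕ) (v w : Word) : Prop :=
  v ∈ cLevel S l ∧ w ∈ cLevel S l ∧ lexLt v w ∧ ¬ related v w ∧
  (∀ u ∈ cLevel S l, lexLt v u → lexLt u w → perp u v ∨ perp u w) ∧
  cLevel S (l + 1) =
    appendSet {z ∈ cLevel S l | lexLt z v} Sig.X ∪
    {v ++ [Sig.R]} ∪
    appendSet {z ∈ cLevel S l | lexLt v z ∧ lexLt z w ∧ perp z v} Sig.X ∪
    appendSet {z ∈ cLevel S l | lexLt v z ∧ lexLt z w ∧ ¬ perp z v} Sig.R ∪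
    {w ++ [Sig.X]} ∪
    appendSet {z ∈ cLevel S l | lexLt w z} Sig.R

def NewPerpLevel (S : Set Word) (l : ℕ) : Prop := ∃ v w, NewPerpLevelAt S l v w

def NewPrecLevelAt (S : Set Word) (l : ℕ) (v w : Word) : Prop :=
  v ∈ cLevel S l ∧ w ∈ cLevel S l ∧ lexLt v w ∧ ¬ related v w ∧
  (∀ u ∈ cLevel S l, lexLt u v → preceq u w ∨ perp u v) ∧
  (∀ u ∈ cLevel S l, lexLt w u → preceq v u ∨ perp w u) ∧
  cLevel S (l + 1) =
    appendSet {z ∈ cLevel S l | lexLt z v ∧ perp z v} Sig.X ∪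
    appendSet {z ∈ cLevel S l | lexLt z v ∧ ¬ perp z v} Sig.L ∪
    {v ++ [Sig.L]} ∪
    appendSet {z ∈ cLevel S l | lexLt v z ∧ lexLt z w} Sig.X ∪
    {w ++ [Sig.R]} ∪
    appendSet {z ∈ cLevel S l | lexLt w z ∧ perp w z} Sig.X ∪
    appendSet {z ∈ cLevel S l | lexLt w z ∧ ¬ perp w z} Sig.R

def NewPrecLevel (S : Set Word) (l : ℕ) : Prop := ∃ v w, NewPrecLevelAt S l v w

def ExactlyOne (a b c d : Prop) : Prop :=
  (a ∧ ¬b ∧ ¬c ∧ ¬d) ∨ (¬a ∧ b ∧ ¬c ∧ ¬d) ∨ (¬a ∧ ¬b ∧ c ∧ ¬d) ∨ (¬a ∧ ¬b ∧ ¬c ∧ d)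

/-- A poset-diary: an antichain under the initial segment relation such that on each level
below the supremum of lengths exactly one of the four critical events happens. -/
def PosetDiary (S : Set Word) : Prop :=
  (∀ u ∈ S, ∀ v ∈ S, u <+: v → u = v) ∧
  ∀ l : ℕ, (∃ w ∈ S, l < w.length) →
    ExactlyOne (LeafLevel S l) (SplitLevel S l) (NewPerpLevel S l) (NewPrecLevel S l)

/-! ### Auxiliary lemmas for STATEMENT 10 -/

lemma idx_append_lt {w : Word} (t : Word) {i : ℕ} (h : i < w.length) :
    idx (w ++ t) i = idx w i :=
  List.getD_append _ _ _ _ h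

lemma idx_append_len (w : Word) (c : Sig) : idx (w ++ [c]) w.length = c := by
  simp [idx, List.getD_eq_getElem?_getD]

lemma idx_prefix {u v : Word} (h : u <+: v) {i : ℕ} (hi : i < u.length) :
    idx u i = idx v i := by
  obtain ⟨t, rfl⟩ := h
  exact (idx_append_lt t hi).symm

lemma idx_take {w : Word} {n i : ℕ} (hi : i < n) : idx (w.take n) i = idx w i := by
  simp [idx, List.getD_eq_getElem?_getD, List.getElem?_take, hi]

lemma getElem?_eq_some_idx {w : Word} {i : ℕ} (h : i < w.length) :
    w[i]? = some (idx w i) := by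
  rw [List.getElem?_eq_getElem h]
  simp [idx, List.getD_eq_getElem?_getD, List.getElem?_eq_getElem h]

lemma take_append_idx {w : Word} {n : ℕ} (h : n < w.length) :
    w.take n ++ [idx w n] = w.take (n + 1) := by
  rw [List.take_succ, getElem?_eq_some_idx h]
  rfl

lemma idx_e_lt {u : Word} (c : Sig) {l' i : ℕ} (hu : u.length = l') (hi : i < l') :
    idx (u ++ [c]) i = idx u i :=
  idx_append_lt _ (by omega)

lemma idx_e_last {u : Word} (c : Sig) {l' : ℕ} (hu : u.length = l') :
    idx (u ++ [c]) l' = c := by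
  rw [← hu]; exact idx_append_len u c

lemma clevel_succ_eq {S : Set Word} {l l' : ℕ} (hll : l < l')
    (hnol' : ∀ u ∈ S, u.length ≠ l') (hdup : ∀ u ∈ S, l' < u.length → idx u l = idx u l') :
    cLevel S (l' + 1) = (fun w => w ++ [idx w l]) '' cLevel S l' := by
  ext v
  constructor
  · rintro ⟨⟨u, hu, hpre⟩, hlen⟩
    have hul : l' + 1 ≤ u.length := hlen ▸ hpre.length_le
    have hd := hdup u hu (by omega)
    have hvl' : idx v l' = idx u l' := idx_prefix hpre (by omega)
    have hvl : idx v l = idx u l := idx_prefix hpre (by omega)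
    have hal : (v.take l').length = l' := by
      rw [List.length_take]; omega
    refine ⟨v.take l', ⟨⟨u, hu, (List.take_prefix _ _).trans hpre⟩, hal⟩, ?_⟩
    show v.take l' ++ [idx (v.take l') l] = v
    rw [idx_take hll, show idx v l = idx v l' by rw [hvl, hvl', hd],
      take_append_idx (by omega)]
    rw [← hlen, List.take_length]
  · rintro ⟨w, ⟨⟨u, hu, hpre⟩, hwl⟩, rfl⟩
    have hlu : l' ≤ u.length := hwl ▸ hpre.length_le
    have hul : l' < u.length := lt_of_le_of_ne hlu (fun h => hnol' u hu h.symm)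
    have hd := hdup u hu hul
    have hw : w = u.take l' := by rw [← hwl]; exact List.prefix_iff_eq_take.mp hpre
    have hidx : idx w l = idx u l := idx_prefix hpre (by omega)
    refine ⟨⟨u, hu, ?_⟩, by simp [hwl]⟩
    show w ++ [idx w l] <+: u
    rw [hidx, hd, hw, take_append_idx hul]
    exact List.take_prefix _ _

lemma prec_e {u v : Word} {l l' : ℕ} (hll : l < l') (hu : u.length = l')
    (hv : v.length = l') :
    prec u v ↔ prec (u ++ [idx u l]) (v ++ [idx v l]) := by
  constructor
  · rintro ⟨i, hiu, hiv, hL, hR, hle⟩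
    refine ⟨i, by simp; omega, by simp; omega, ?_, ?_, fun j hj => ?_⟩
    · rwa [idx_append_lt _ hiu]
    · rwa [idx_append_lt _ hiv]
    · rw [idx_append_lt _ (by omega), idx_append_lt _ (by omega)]
      exact hle j hj
  · rintro ⟨i, hiu, hiv, hL, hR, hle⟩
    simp at hiu
    by_cases hi : i < l'
    · refine ⟨i, by omega, by omega, ?_, ?_, fun j hj => ?_⟩
      · rwa [idx_e_lt _ hu hi] at hL
      · rwa [idx_e_lt _ hv hi] at hR
      · have := hle j hj
        rwa [idx_e_lt _ hu (by omega), idx_e_lt _ hv (by omega)] at this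
    · have hi' : i = l' := by omega
      subst hi'
      rw [idx_e_last _ hu] at hL
      rw [idx_e_last _ hv] at hR
      refine ⟨l, by omega, by omega, hL, hR, fun j hj => ?_⟩
      have := hle j (by omega)
      rwa [idx_e_lt _ hu (by omega), idx_e_lt _ hv (by omega)] at this

lemma trleq_e {u v : Word} {l l' : ℕ} (hll : l < l') (hu : u.length = l')
    (hv : v.length = l') :
    trleq u v ↔ trleq (u ++ [idx u l]) (v ++ [idx v l]) := by
  constructor
  · rintro ⟨hlen, h⟩
    refine ⟨by simp [hu, hv], fun i hi => ?_⟩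
    simp at hi
    by_cases hi' : i < l'
    · rw [idx_e_lt _ hu hi', idx_e_lt _ hv hi']
      exact h i (by omega)
    · have : i = l' := by omega
      subst this
      rw [idx_e_last _ hu, idx_e_last _ hv]
      exact h l (by omega)
  · rintro ⟨hlen, h⟩
    refine ⟨by omega, fun i hi => ?_⟩
    have := h i (by simp; omega)
    rwa [idx_e_lt _ hu (by omega), idx_e_lt _ hv (by omega)] at this

lemma lexLt_e {u v : Word} {l l' : ℕ} (hll : l < l') (hu : u.length = l')
    (hv : v.length = l') :
    lexLt u v ↔ lexLt (u ++ [idx u l]) (v ++ [idx v l]) := by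
  constructor
  · rintro (⟨i, hiu, hiv, hlt, heq⟩ | ⟨hlen, _⟩)
    · refine Or.inl ⟨i, by simp; omega, by simp; omega, ?_, fun j hj => ?_⟩
      · rwa [idx_append_lt _ hiu, idx_append_lt _ hiv]
      · rw [idx_append_lt _ (by omega), idx_append_lt _ (by omega)]
        exact heq j hj
    · omega
  · rintro (⟨i, hiu, hiv, hlt, heq⟩ | ⟨hlen, _⟩)
    · simp at hiu
      by_cases hi : i < l'
      · refine Or.inl ⟨i, by omega, by omega, ?_, fun j hj => ?_⟩
        · rwa [idx_e_lt _ hu hi, idx_e_lt _ hv hi] at hlt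
        · have := heq j hj
          rwa [idx_e_lt _ hu (by omega), idx_e_lt _ hv (by omega)] at this
      · have : i = l' := by omega
        subst this
        rw [idx_e_last _ hu, idx_e_last _ hv] at hlt
        have := heq l (by omega)
        rw [idx_e_lt _ hu (by omega), idx_e_lt _ hv (by omega)] at this
        rw [this] at hlt
        exact absurd hlt (Nat.lt_irrefl _)
    · simp at hlen; omega

lemma eq_of_e_eq {u v : Word} {l : ℕ} (hlen : u.length = v.length)
    (h : u ++ [idx u l] = v ++ [idx v l]) : u = v :=
  (List.append_inj h hlen).1

lemma lexLe_e {u v : Word} {l l' : ℕ} (hll : l < l') (hu : u.length = l')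
    (hv : v.length = l') :
    lexLe u v ↔ lexLe (u ++ [idx u l]) (v ++ [idx v l]) := by
  unfold lexLe
  constructor
  · rintro (h | rfl)
    · exact Or.inl ((lexLt_e hll hu hv).mp h)
    · exact Or.inr rfl
  · rintro (h | h)
    · exact Or.inl ((lexLt_e hll hu hv).mpr h)
    · exact Or.inr (eq_of_e_eq (by omega) h)

lemma preceq_e {u v : Word} {l l' : ℕ} (hll : l < l') (hu : u.length = l')
    (hv : v.length = l') :
    preceq u v ↔ preceq (u ++ [idx u l]) (v ++ [idx v l]) := by
  unfold preceq
  constructor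
  · rintro (h | rfl)
    · exact Or.inl ((prec_e hll hu hv).mp h)
    · exact Or.inr rfl
  · rintro (h | h)
    · exact Or.inl ((prec_e hll hu hv).mpr h)
    · exact Or.inr (eq_of_e_eq (by omega) h)

lemma compatPair_e {u v : Word} {l l' : ℕ} (hll : l < l') (hu : u.length = l')
    (hv : v.length = l') (h : compatPair u v) :
    compatPair (u ++ [idx u l]) (v ++ [idx v l]) := by
  obtain ⟨h1, h2⟩ := h
  constructor
  · intro m hm hRL
    obtain ⟨hR, hL⟩ := hRL
    simp at hm
    by_cases hm' : m < l'
    · exact h1 m (by omega) ⟨by rwa [idx_e_lt _ hu hm'] at hR,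
        by rwa [idx_e_lt _ hv hm'] at hL⟩
    · have : m = l' := by omega
      subst this
      rw [idx_e_last _ hu] at hR
      rw [idx_e_last _ hv] at hL
      exact h1 l (by omega) ⟨hR, hL⟩
  · rintro ⟨m, hm, hLu, hRv⟩ m' hm'
    simp at hm hm'
    have hwit : ∃ m₀ < min u.length v.length, idx u m₀ = Sig.L ∧ idx v m₀ = Sig.R := by
      by_cases hmlt : m < l'
      · exact ⟨m, by omega, by rwa [idx_e_lt _ hu hmlt] at hLu,
          by rwa [idx_e_lt _ hv hmlt] at hRv⟩
      · have : m = l' := by omega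
        subst this
        rw [idx_e_last _ hu] at hLu
        rw [idx_e_last _ hv] at hRv
        exact ⟨l, by omega, hLu, hRv⟩
    have hall := h2 hwit
    by_cases hm'' : m' < l'
    · rw [idx_e_lt _ hu hm'', idx_e_lt _ hv hm'']
      exact hall m' (by omega)
    · have : m' = l' := by omega
      subst this
      rw [idx_e_last _ hu, idx_e_last _ hv]
      exact hall l (by omega)

lemma compatible_e {u v : Word} {l l' : ℕ} (hll : l < l') (hu : u.length = l')
    (hv : v.length = l') (h : compatible u v) :
    compatible (u ++ [idx u l]) (v ++ [idx v l]) := by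
  rcases h with ⟨hle, hcp⟩ | ⟨hle, hcp⟩
  · exact Or.inl ⟨(lexLe_e hll hu hv).mp hle, compatPair_e hll hu hv hcp⟩
  · exact Or.inr ⟨(lexLe_e hll hv hu).mp hle, compatPair_e hll hv hu hcp⟩


/-- duplicate levels are not interesting. -/
theorem duplicate_level_not_interesting (S : Set Word) (l l' : ℕ) (hll : l < l')
    (hnol : ∀ u ∈ S, u.length ≠ l) (hnol' : ∀ u ∈ S, u.length ≠ l')
    (hdup : ∀ u ∈ S, l' < u.length → idx u l = idx u l') :
    ¬ Interesting S l' := by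
  have hE := clevel_succ_eq hll hnol' hdup
  intro hInt
  rcases hInt with h1 | h2 | h3
  · apply h1
    refine ⟨fun w => w ++ [idx w l], ?_, ?_⟩
    · rw [hE]
      apply Set.InjOn.bijOn_image
      intro u hu v hv h
      exact eq_of_e_eq (hu.2.trans hv.2.symm) h
    · intro u hu v hv
      exact ⟨preceq_e hll hu.2 hv.2, trleq_e hll hu.2 hv.2, lexLe_e hll hu.2 hv.2⟩
  · obtain ⟨u, hu, v, hv, hnc, hc⟩ := h2
    rw [hE] at hu hv
    obtain ⟨a, ha, rfl⟩ := hu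
    obtain ⟨b, hb, rfl⟩ := hv
    have hta : (a ++ [idx a l]).take l' = a := by rw [← ha.2]; exact List.take_left
    have htb : (b ++ [idx b l]).take l' = b := by rw [← hb.2]; exact List.take_left
    rw [hta, htb] at hc
    exact hnc (compatible_e hll ha.2 hb.2 hc)
  · obtain ⟨u, hu, hlen⟩ := h3
    exact hnol' u hu hlen
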